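/- Let n, ℓ ≥ 1, T > 0, let A, C, Q : [0,T] → ℝ^{n×n}, B, D : [0,T] → ℝ^{n×ℓ}, R : [0,T] → ℝ^{ℓ×ℓ} be given, and let G₁, G₂ ∈ ℝ^{n×n}. Suppose Φ₁, Φ₂, Φ₆ : [0,T] → ℝ^{n×n} are differentiable, Dᵀ(t)Φ₁(t)D(t) + R(t) is invertible for every t, and, with Ψ̄(t) := −(Dᵀ Φ₁ D + R)⁻¹ (Dᵀ Φ₁ C + Bᵀ Φ₁ + Bᵀ Φ₆ᵀ Φ₂ Φ₆)(t), the system (Ri-LQ1-S) holds on [0,T]: Φ̇₁ + Φ₁(A + BΨ̄) + (A + BΨ̄)ᵀΦ₁ + (C + DΨ̄)ᵀΦ₁(C + DΨ̄) + Q + Ψ̄ᵀRΨ̄ = 0, Φ̇₂ = 0, Φ̇₆ + Φ₆(A + BΨ̄) = 0, with Φ₁(T) = G₁, Φ₂(T) = G₂, Φ₆(T) = Iₙ. Define Φ := Φ₁ and Φ̂ := Φ₁ + Φ₆ᵀ Φ₂ Φ₆. Then Φ̂(T) = G₁ + G₂, Ψ̄(t) = −(DᵀΦD + R)⁻¹(DᵀΦC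 + BᵀΦ̂)(t) for all t, and (Φ, Φ̂) satisfies the system (Ri-LQ2-S): Φ̇ + Φ(A + BΨ̄) + (A + BΨ̄)ᵀΦ + (C + DΨ̄)ᵀΦ(C + DΨ̄) + Q + Ψ̄ᵀRΨ̄ = 0 and Φ̇̂ + Φ̂(A + BΨ̄) + (A + BΨ̄)ᵀΦ̂ + (C + DΨ̄)ᵀΦ(C + DΨ̄) + Q + Ψ̄ᵀRΨ̄ = 0 on [0,T]. -/

import Mathlib

open Matrix

attribute [local instance] Matrix.normedAddCommGroup Matrix.normedSpace


lemma matDeriv_iff {a b : ℕ} {f : ℝ → Matrix (Fin a) (Fin b) ℝ}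
    {f' : Matrix (Fin a) (Fin b) ℝ} {s : Set ℝ} {x : ℝ} :
    HasDerivWithinAt f f' s x ↔
      ∀ i j, HasDerivWithinAt (fun t => f t i j) (f' i j) s x := by
  refine hasDerivWithinAt_pi.trans ?_
  exact forall_congr' fun i => hasDerivWithinAt_pi

lemma matDeriv_mul {a b c : ℕ} {f : ℝ → Matrix (Fin a) (Fin b) ℝ}
    {g : ℝ → Matrix (Fin b) (Fin c) ℝ} {f' g'} {s : Set ℝ} {x : ℝ}
    (hf : HasDerivWithinAt f f' s x) (hg : HasDerivWithinAt g g' s x) :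
    HasDerivWithinAt (fun t => f t * g t) (f' * g x + f x * g') s x := by
  rw [matDeriv_iff] at *
  intro i j
  have : ∀ t, (f t * g t) i j = ∑ k, f t i k * g t k j := fun t => Matrix.mul_apply
  simp only [this]
  have h := HasDerivWithinAt.fun_sum (u := Finset.univ)
    (fun k _ => ((hf i k).mul (hg k j)))
  refine h.congr_deriv ?_
  simp [Matrix.add_apply, Matrix.mul_apply, Finset.sum_add_distrib]

lemma matDeriv_transpose {a b : ℕ} {f : ℝ → Matrix (Fin a) (Fin b) ℝ}
    {f'} {s : Set ℝ} {x : ℝ} (hf : HasDerivWithinAt f f' s x) :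
    HasDerivWithinAt (fun t => (f t)ᵀ) f'ᵀ s x := by
  rw [matDeriv_iff] at *
  exact fun i j => hf j i

/-- Section 4: under the substitution `Φ = Φ₁`, `Φ̂ = Φ₁ + Φ₆ᵀ Φ₂ Φ₆`, a solution
of the Riccati system (Ri-LQ1-S) yields a solution of the mean-field-type Riccati
system (Ri-LQ2-S), with `Ψ̄ = -(DᵀΦD + R)⁻¹ (DᵀΦC + BᵀΦ̂)` and `Φ̂(T) = G₁ + G₂`. -/
theorem statement12 (n l : ℕ) (hn : 1 ≤ n) (hl : 1 ≤ l) (T : ℝ) (hT : 0 < T)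
    (A C Q : ℝ → Matrix (Fin n) (Fin n) ℝ)
    (B D : ℝ → Matrix (Fin n) (Fin l) ℝ)
    (R : ℝ → Matrix (Fin l) (Fin l) ℝ)
    (G₁ G₂ : Matrix (Fin n) (Fin n) ℝ)
    (Φ₁ Φ₂ Φ₆ Φ₁' Φ₂' Φ₆' : ℝ → Matrix (Fin n) (Fin n) ℝ)
    (hd₁ : ∀ t ∈ Set.Icc (0 : ℝ) T, HasDerivWithinAt Φ₁ (Φ₁' t) (Set.Icc (0 : ℝ) T) t)
    (hd₂ : ∀ t ∈ Set.Icc (0 : ℝ) T, HasDerivWithinAt Φ₂ (Φ₂' t) (Set.Icc (0 : ℝ) T) t)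
    (hd₆ : ∀ t ∈ Set.Icc (0 : ℝ) T, HasDerivWithinAt Φ₆ (Φ₆' t) (Set.Icc (0 : ℝ) T) t)
    (hinv : ∀ t ∈ Set.Icc (0 : ℝ) T, IsUnit ((D t)ᵀ * Φ₁ t * D t + R t))
    (Ψ : ℝ → Matrix (Fin l) (Fin n) ℝ)
    (hΨ : ∀ t, Ψ t = -(((D t)ᵀ * Φ₁ t * D t + R t)⁻¹
      * ((D t)ᵀ * Φ₁ t * C t + (B t)ᵀ * Φ₁ t + (B t)ᵀ * (Φ₆ t)ᵀ * Φ₂ t * Φ₆ t)))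
    (heq₁ : ∀ t ∈ Set.Icc (0 : ℝ) T,
      Φ₁' t + Φ₁ t * (A t + B t * Ψ t) + (A t + B t * Ψ t)ᵀ * Φ₁ t
        + (C t + D t * Ψ t)ᵀ * Φ₁ t * (C t + D t * Ψ t)
        + Q t + (Ψ t)ᵀ * R t * Ψ t = 0)
    (heq₂ : ∀ t ∈ Set.Icc (0 : ℝ) T, Φ₂' t = 0)
    (heq₆ : ∀ t ∈ Set.Icc (0 : ℝ) T, Φ₆' t + Φ₆ t * (A t + B t * Ψ t) = 0)
    (hT₁ : Φ₁ T = G₁) (hT₂ : Φ₂ T = G₂) (hT₆ : Φ₆ T = 1) :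
    (Φ₁ T + (Φ₆ T)ᵀ * Φ₂ T * Φ₆ T = G₁ + G₂) ∧
    (∀ t ∈ Set.Icc (0 : ℝ) T,
      Ψ t = -(((D t)ᵀ * Φ₁ t * D t + R t)⁻¹
        * ((D t)ᵀ * Φ₁ t * C t
          + (B t)ᵀ * (Φ₁ t + (Φ₆ t)ᵀ * Φ₂ t * Φ₆ t)))) ∧
    (∀ t ∈ Set.Icc (0 : ℝ) T,
      Φ₁' t + Φ₁ t * (A t + B t * Ψ t) + (A t + B t * Ψ t)ᵀ * Φ₁ t
        + (C t + D t * Ψ t)ᵀ * Φ₁ t * (C t + D t * Ψ t)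
        + Q t + (Ψ t)ᵀ * R t * Ψ t = 0) ∧
    (∀ t ∈ Set.Icc (0 : ℝ) T,
      HasDerivWithinAt (fun τ => Φ₁ τ + (Φ₆ τ)ᵀ * Φ₂ τ * Φ₆ τ)
        (-((Φ₁ t + (Φ₆ t)ᵀ * Φ₂ t * Φ₆ t) * (A t + B t * Ψ t)
          + (A t + B t * Ψ t)ᵀ * (Φ₁ t + (Φ₆ t)ᵀ * Φ₂ t * Φ₆ t)
          + (C t + D t * Ψ t)ᵀ * Φ₁ t * (C t + D t * Ψ t)
          + Q t + (Ψ t)ᵀ * R t * Ψ t))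
        (Set.Icc (0 : ℝ) T) t) := by

  refine ⟨?_, ?_, heq₁, ?_⟩
  · rw [hT₁, hT₂, hT₆]; simp
  · intro t _
    rw [hΨ t]
    congr 2
    simp [Matrix.mul_add, Matrix.mul_assoc, add_assoc]
  · intro t ht
    have h6' : Φ₆' t = -(Φ₆ t * (A t + B t * Ψ t)) :=
      eq_neg_of_add_eq_zero_left (heq₆ t ht)
    have h1' : Φ₁' t = -(Φ₁ t * (A t + B t * Ψ t) + ((A t + B t * Ψ t)ᵀ * Φ₁ t
        + ((C t + D t * Ψ t)ᵀ * Φ₁ t * (C t + D t * Ψ t)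
        + (Q t + (Ψ t)ᵀ * R t * Ψ t)))) := by
      apply eq_neg_of_add_eq_zero_left
      have h := heq₁ t ht
      abel_nf at h ⊢
      exact h
    have key := (hd₁ t ht).add
      (matDeriv_mul (matDeriv_mul (matDeriv_transpose (hd₆ t ht)) (hd₂ t ht)) (hd₆ t ht))
    refine key.congr_deriv ?_
    rw [h1', h6', heq₂ t ht]
    simp only [Matrix.transpose_neg, Matrix.transpose_mul, Matrix.mul_zero,
      Matrix.zero_mul, mul_zero, zero_mul, add_zero, neg_mul, mul_neg]
    noncomm_ring
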